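/- Let (T_n^i)_{n≥1} and (T_n^j)_{n≥1} be the i-th and j-th coordinates of an i.i.d. sequence of random vectors, with means μ_i and μ_j respectively, both finite and positive, and let N^i, N^j be the associated renewal counting processes. Suppose v_i, v_j : [0,∞) → [0,∞) satisfy v_j(t) → ∞ and liminf_{t→∞} v_i(t)/v_j(t) > μ_i/μ_j. Then N^i(v_i(t)) − N^j(v_j(t)) → ∞ almost surely as t → ∞; in particular P(N^i(v_i(t)) ≤ N^j(v_j(t))) → 0. -/

import Mathlib

open Filter Topology MeasureTheory ProbabilityTheory
open scoped ENNReal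

private lemma nat_sSup_eq_iff {A : Set ℕ} {k : ℕ} :
    sSup A = k ↔ (k ∈ A ∧ ∀ m, k < m → m ∉ A) ∨ (k = 0 ∧ (A = ∅ ∨ ¬BddAbove A)) := by
  constructor
  · intro h
    rcases Set.eq_empty_or_nonempty A with hA | hA
    · right
      refine ⟨?_, Or.inl hA⟩
      rw [← h, hA, csSup_empty]
      rfl
    · by_cases hb : BddAbove A
      · left
        subst h
        exact ⟨Nat.sSup_mem hA hb, fun m hm hmem => absurd (le_csSup hb hmem) (not_le.2 hm)⟩
      · right
        refine ⟨?_, Or.inr hb⟩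
        rw [← h, csSup_of_not_bddAbove hb, csSup_empty]
        rfl
  · rintro (⟨hk, hub⟩ | ⟨rfl, (rfl | hnb)⟩)
    · have hb : BddAbove A := ⟨k, fun a ha => not_lt.1 fun h' => hub a h' ha⟩
      exact le_antisymm (csSup_le ⟨k, hk⟩ fun a ha => not_lt.1 fun h' => hub a h' ha)
        (le_csSup hb hk)
    · rw [csSup_empty]; rfl
    · rw [csSup_of_not_bddAbove hnb, csSup_empty]; rfl

private lemma measurable_count {Ω : Type*} [MeasurableSpace Ω] (f : ℕ → Ω → ℝ)
    (hf : ∀ n, Measurable (f n)) (t : ℝ) :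
    Measurable fun ω => sSup {n : ℕ | f n ω ≤ t} := by
  apply measurable_to_countable'
  intro k
  by_cases hk : k = 0
  · subst hk
    have hset : (fun ω => sSup {n : ℕ | f n ω ≤ t}) ⁻¹' {0} =
        ({ω | f 0 ω ≤ t} ∩ ⋂ m, ⋂ _ : 0 < m, {ω | ¬ f m ω ≤ t}) ∪
          ((⋂ n, {ω | ¬ f n ω ≤ t}) ∪ ⋂ N, ⋃ m, ⋃ _ : N < m, {ω | f m ω ≤ t}) := by
      ext ω
      simp only [Set.mem_preimage, Set.mem_singleton_iff, nat_sSup_eq_iff, Set.mem_union,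
        Set.mem_inter_iff, Set.mem_iInter, Set.mem_iUnion, Set.mem_setOf_eq, exists_prop]
      constructor
      · rintro (⟨h1, h2⟩ | ⟨-, h3 | h4⟩)
        · exact Or.inl ⟨h1, fun m hm => h2 m hm⟩
        · exact Or.inr (Or.inl fun n hn => (Set.eq_empty_iff_forall_notMem.1 h3 n) hn)
        · refine Or.inr (Or.inr fun N => ?_)
          obtain ⟨m, hm, hm2⟩ := not_bddAbove_iff.1 h4 N
          exact ⟨m, hm2, hm⟩
      · rintro (⟨h1, h2⟩ | h | h)
        · exact Or.inl ⟨h1, h2⟩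
        · exact Or.inr ⟨trivial, Or.inl (Set.eq_empty_iff_forall_notMem.2 h)⟩
        · refine Or.inr ⟨trivial, Or.inr (not_bddAbove_iff.2 fun N => ?_)⟩
          obtain ⟨m, h1, h2⟩ := h N
          exact ⟨m, h2, h1⟩
    rw [hset]
    refine MeasurableSet.union
      (MeasurableSet.inter (measurableSet_le (hf 0) measurable_const)
        (MeasurableSet.iInter fun m => MeasurableSet.iInter fun _ =>
          (measurableSet_le (hf m) measurable_const).compl)) (MeasurableSet.union
      (MeasurableSet.iInter fun n => (measurableSet_le (hf n) measurable_const).compl)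
      (MeasurableSet.iInter fun N => MeasurableSet.iUnion fun m => MeasurableSet.iUnion fun _ =>
        measurableSet_le (hf m) measurable_const))
  · have hset : (fun ω => sSup {n : ℕ | f n ω ≤ t}) ⁻¹' {k} =
        {ω | f k ω ≤ t} ∩ ⋂ m, ⋂ _ : k < m, {ω | ¬ f m ω ≤ t} := by
      ext ω
      simp only [Set.mem_preimage, Set.mem_singleton_iff, nat_sSup_eq_iff, Set.mem_inter_iff,
        Set.mem_iInter, Set.mem_setOf_eq]
      constructor
      · rintro (⟨h1, h2⟩ | ⟨hk0, -⟩)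
        · exact ⟨h1, fun m hm => h2 m hm⟩
        · exact absurd hk0 hk
      · rintro ⟨h1, h2⟩
        exact Or.inl ⟨h1, h2⟩
    rw [hset]
    exact MeasurableSet.inter (measurableSet_le (hf k) measurable_const)
      (MeasurableSet.iInter fun m => MeasurableSet.iInter fun _ =>
        (measurableSet_le (hf m) measurable_const).compl)

/-- Deterministic renewal ratio lemma: if partial sums grow like `μ n`, the
counting function grows like `t / μ`. -/
private lemma renewal_ratio (s : ℕ → ℝ) (hmono : Monotone s) (h0 : s 0 = 0) {μ : ℝ}
    (hμ : 0 < μ) (hlim : Tendsto (fun n : ℕ => s n / n) atTop (𝓝 μ)) :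
    Tendsto (fun t : ℝ => ((sSup {n : ℕ | s n ≤ t} : ℕ) : ℝ) / t) atTop (𝓝 μ⁻¹) := by
  set N : ℝ → ℕ := fun t => sSup {n : ℕ | s n ≤ t} with hNdef
  -- the partial sums tend to infinity
  have hstop : Tendsto s atTop atTop := by
    have hev : ∀ᶠ n : ℕ in atTop, μ / 2 < s n / n := by
      filter_upwards [hlim.eventually (lt_mem_nhds (by linarith : μ / 2 < μ))] with n hn
      exact hn
    have hgrow : Tendsto (fun n : ℕ => μ / 2 * n) atTop atTop :=
      Tendsto.const_mul_atTop (by linarith) tendsto_natCast_atTop_atTop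
    refine tendsto_atTop_mono' atTop ?_ hgrow
    filter_upwards [hev, eventually_ge_atTop 1] with n hn hn1
    have hn0 : (0 : ℝ) < n := by exact_mod_cast hn1
    have h5 : μ / 2 * n < s n / n * n := by nlinarith
    have h6 : s n / n * n = s n := by field_simp
    linarith
  have hbdd : ∀ t : ℝ, BddAbove {n : ℕ | s n ≤ t} := by
    intro t
    obtain ⟨m, hm⟩ := eventually_atTop.1 (tendsto_atTop.1 hstop (t + 1))
    refine ⟨m, fun a ha => ?_⟩
    by_contra hma
    have := hm a (le_of_not_ge hma)
    have : s a ≤ t := ha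
    linarith [hm a (le_of_not_ge hma)]
  have hmem : ∀ t : ℝ, 0 ≤ t → s (N t) ≤ t := by
    intro t ht
    have hne : {n : ℕ | s n ≤ t}.Nonempty := ⟨0, by simpa [h0] using ht⟩
    exact Nat.sSup_mem hne (hbdd t)
  have hsucc : ∀ t : ℝ, t < s (N t + 1) := by
    intro t
    by_contra h
    have hmem' : N t + 1 ∈ {n : ℕ | s n ≤ t} := le_of_not_gt h
    have h2 : N t + 1 ≤ N t := le_csSup (hbdd t) hmem'
    omega
  have hNtop : Tendsto N atTop atTop := by
    refine tendsto_atTop.2 fun b => ?_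
    filter_upwards [eventually_ge_atTop (s b)] with t ht
    exact le_csSup (hbdd t) (by exact ht : s b ≤ t)
  -- auxiliary limit : s (n+1) / n → μ
  have haux : Tendsto (fun n : ℕ => s (n + 1) / n) atTop (𝓝 μ) := by
    have h1 : Tendsto (fun n : ℕ => s (n + 1) / (n + 1 : ℕ)) atTop (𝓝 μ) :=
      hlim.comp (tendsto_add_atTop_nat 1)
    have h2 : Tendsto (fun n : ℕ => (1 : ℝ) + 1 / n) atTop (𝓝 1) := by
      simpa using (tendsto_const_nhds (x := (1:ℝ))).add tendsto_one_div_atTop_nhds_zero_nat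
    have h3 : Tendsto (fun n : ℕ => s (n + 1) / (n + 1 : ℕ) * ((1 : ℝ) + 1 / n)) atTop
        (𝓝 (μ * 1)) := h1.mul h2
    rw [mul_one] at h3
    apply h3.congr'
    filter_upwards [eventually_ge_atTop 1] with n hn
    have hn0 : (n : ℝ) ≠ 0 := by
      have : (0 : ℝ) < n := by exact_mod_cast hn
      linarith
    have hn1 : ((n : ℕ) + 1 : ℝ) ≠ 0 := by positivity
    push_cast
    field_simp
  -- squeeze t / N t between s (N t) / N t and s (N t + 1) / N t
  have hTT : Tendsto (fun t : ℝ => t / (N t : ℝ)) atTop (𝓝 μ) := by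
    refine tendsto_of_tendsto_of_tendsto_of_le_of_le' (hlim.comp hNtop) (haux.comp hNtop) ?_ ?_
    · filter_upwards [eventually_ge_atTop (0 : ℝ), hNtop.eventually_ge_atTop 1] with t ht hN
      have hN0 : (0 : ℝ) < (N t : ℝ) := by exact_mod_cast hN
      exact (div_le_div_iff_of_pos_right hN0).2 (hmem t ht)
    · filter_upwards [hNtop.eventually_ge_atTop 1] with t hN
      have hN0 : (0 : ℝ) < (N t : ℝ) := by exact_mod_cast hN
      exact (div_le_div_iff_of_pos_right hN0).2 (hsucc t).le
  have := hTT.inv₀ (ne_of_gt hμ)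
  simpa only [inv_div] using this

/-- separation of renewal counting processes under the
time-scale separation condition. -/
theorem renewal_counts_separate
    {Ω : Type*} [MeasurableSpace Ω] (P : Measure Ω) [IsProbabilityMeasure P]
    (T : ℕ → Ω → ℝ × ℝ) (μi μj : ℝ) (vi vj : ℝ → ℝ)
    (hmeas : ∀ n, Measurable (T n))
    (hindep : iIndepFun T P)
    (hident : ∀ n, IdentDistrib (T n) (T 0) P P)
    (hnonneg : ∀ n, ∀ᵐ ω ∂P, 0 ≤ (T n ω).1 ∧ 0 ≤ (T n ω).2)
    (hint1 : Integrable (fun ω => (T 0 ω).1) P)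
    (hint2 : Integrable (fun ω => (T 0 ω).2) P)
    (hmean1 : ∫ ω, (T 0 ω).1 ∂P = μi) (hmean2 : ∫ ω, (T 0 ω).2 ∂P = μj)
    (hμi : 0 < μi) (hμj : 0 < μj)
    (hvnonneg : ∀ t, 0 ≤ t → 0 ≤ vi t ∧ 0 ≤ vj t)
    (hvjtop : Tendsto vj atTop atTop)
    (hliminf : μi / μj < Filter.liminf (fun t => vi t / vj t) atTop)
    (Ni Nj : ℝ → Ω → ℕ)
    (hNi : ∀ t ω, Ni t ω = sSup {n : ℕ | ∑ k ∈ Finset.range n, (T k ω).1 ≤ t})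
    (hNj : ∀ t ω, Nj t ω = sSup {n : ℕ | ∑ k ∈ Finset.range n, (T k ω).2 ≤ t}) :
    (∀ᵐ ω ∂P,
        Tendsto (fun t : ℝ => ((Ni (vi t) ω : ℝ) - (Nj (vj t) ω : ℝ)))
          atTop atTop) ∧
      Tendsto (fun t : ℝ => P {ω | Ni (vi t) ω ≤ Nj (vj t) ω}) atTop (𝓝 0) := by
  -- strong laws for the two coordinates
  have hXi_indep : Pairwise (Function.onFun (IndepFun · · P) fun n ω => (T n ω).1) :=
    fun i j hij => (hindep.comp (fun _ => Prod.fst) (fun _ => measurable_fst)).indepFun hij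
  have hXj_indep : Pairwise (Function.onFun (IndepFun · · P) fun n ω => (T n ω).2) :=
    fun i j hij => (hindep.comp (fun _ => Prod.snd) (fun _ => measurable_snd)).indepFun hij
  have slln_i : ∀ᵐ ω ∂P, Tendsto
      (fun n : ℕ => (∑ k ∈ Finset.range n, (T k ω).1) / n) atTop (𝓝 μi) := by
    rw [← hmean1]
    exact strong_law_ae_real (fun n ω => (T n ω).1) hint1 hXi_indep
      (fun n => (hident n).comp measurable_fst)
  have slln_j : ∀ᵐ ω ∂P, Tendsto
      (fun n : ℕ => (∑ k ∈ Finset.range n, (T k ω).2) / n) atTop (𝓝 μj) := by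
    rw [← hmean2]
    exact strong_law_ae_real (fun n ω => (T n ω).2) hint2 hXj_indep
      (fun n => (hident n).comp measurable_snd)
  -- choose the constant c strictly between μi/μj and the liminf
  set L := Filter.liminf (fun t => vi t / vj t) atTop with hLdef
  set c := (μi / μj + L) / 2 with hcdef
  have hratio_pos : 0 < μi / μj := div_pos hμi hμj
  have hc1 : μi / μj < c := by rw [hcdef]; linarith
  have hc2 : c < L := by rw [hcdef]; linarith
  have hc0 : 0 < c := lt_trans hratio_pos hc1
  have hbound : IsBoundedUnder (· ≥ ·) (atTop : Filter ℝ) (fun t => vi t / vj t) := by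
    refine ⟨0, ?_⟩
    rw [eventually_map]
    filter_upwards [eventually_ge_atTop (0 : ℝ)] with t ht
    exact div_nonneg (hvnonneg t ht).1 (hvnonneg t ht).2
  have hev_c : ∀ᶠ t in atTop, c < vi t / vj t := eventually_lt_of_lt_liminf hc2 hbound
  have hvj1 : ∀ᶠ t in atTop, (1 : ℝ) ≤ vj t := hvjtop.eventually_ge_atTop 1
  have hvi_lb : ∀ᶠ t in atTop, c * vj t ≤ vi t := by
    filter_upwards [hev_c, hvj1] with t h1 h2
    have hvj0 : (0 : ℝ) < vj t := by linarith
    exact ((lt_div_iff₀ hvj0).1 h1).le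
  have hvi_top : Tendsto vi atTop atTop :=
    tendsto_atTop_mono' atTop hvi_lb (hvjtop.const_mul_atTop hc0)
  -- the gap constants
  obtain ⟨Δ, hΔdef⟩ : ∃ Δ : ℝ, Δ = c * μi⁻¹ - μj⁻¹ := ⟨_, rfl⟩
  have hΔ : 0 < Δ := by
    have h1 : (μi / μj) * μi⁻¹ < c * μi⁻¹ :=
      mul_lt_mul_of_pos_right hc1 (inv_pos.2 hμi)
    have h2 : (μi / μj) * μi⁻¹ = μj⁻¹ := by field_simp
    rw [hΔdef]; linarith
  obtain ⟨ε, hεdef⟩ : ∃ ε : ℝ, ε = Δ / (2 * (c + 1)) := ⟨_, rfl⟩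
  have hε : 0 < ε := by rw [hεdef]; exact div_pos hΔ (by positivity)
  have hεlt : ε < μi⁻¹ := by
    rw [hεdef, hΔdef, div_lt_iff₀ (by positivity)]
    nlinarith [mul_pos hc0 (inv_pos.2 hμi), inv_pos.2 hμj, inv_pos.2 hμi]
  have hkey : (μi⁻¹ - ε) * c - (μj⁻¹ + ε) = Δ / 2 := by
    have hcne : c + 1 ≠ 0 := by positivity
    rw [hεdef, hΔdef]
    field_simp
    ring
  -- PART 1 : almost sure divergence
  have part1 : ∀ᵐ ω ∂P,
      Tendsto (fun t : ℝ => ((Ni (vi t) ω : ℝ) - (Nj (vj t) ω : ℝ))) atTop atTop := by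
    filter_upwards [slln_i, slln_j, ae_all_iff.2 hnonneg] with ω hi hj hnn
    have hmono_i : Monotone fun n => ∑ k ∈ Finset.range n, (T k ω).1 := by
      apply monotone_nat_of_le_succ
      intro n
      rw [Finset.sum_range_succ]
      linarith [(hnn n).1]
    have hmono_j : Monotone fun n => ∑ k ∈ Finset.range n, (T k ω).2 := by
      apply monotone_nat_of_le_succ
      intro n
      rw [Finset.sum_range_succ]
      linarith [(hnn n).2]
    have ratio_i := renewal_ratio (fun n => ∑ k ∈ Finset.range n, (T k ω).1)
      hmono_i (by simp) hμi hi
    have ratio_j := renewal_ratio (fun n => ∑ k ∈ Finset.range n, (T k ω).2)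
      hmono_j (by simp) hμj hj
    have Ri : Tendsto (fun u : ℝ => (Ni u ω : ℝ) / u) atTop (𝓝 μi⁻¹) := by
      simp only [hNi]; exact ratio_i
    have Rj : Tendsto (fun u : ℝ => (Nj u ω : ℝ) / u) atTop (𝓝 μj⁻¹) := by
      simp only [hNj]; exact ratio_j
    have Rvi : Tendsto (fun t : ℝ => (Ni (vi t) ω : ℝ) / vi t) atTop (𝓝 μi⁻¹) :=
      Ri.comp hvi_top
    have Rvj : Tendsto (fun t : ℝ => (Nj (vj t) ω : ℝ) / vj t) atTop (𝓝 μj⁻¹) :=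
      Rj.comp hvjtop
    refine tendsto_atTop_mono' atTop ?_ (hvjtop.const_mul_atTop (half_pos hΔ))
    filter_upwards [Rvi.eventually (lt_mem_nhds (show μi⁻¹ - ε < μi⁻¹ by linarith)),
      Rvj.eventually (gt_mem_nhds (show μj⁻¹ < μj⁻¹ + ε by linarith)),
      hev_c, hvj1, hvi_top.eventually_ge_atTop 1] with t h1 h2 h3 h4 h5
    have hvj0 : (0 : ℝ) < vj t := by linarith
    have hvi0 : (0 : ℝ) < vi t := by linarith
    have ha0 : (0 : ℝ) ≤ (Ni (vi t) ω : ℝ) / vi t :=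
      div_nonneg (Nat.cast_nonneg _) hvi0.le
    have hmul : (μi⁻¹ - ε) * c ≤ ((Ni (vi t) ω : ℝ) / vi t) * (vi t / vj t) :=
      mul_le_mul h1.le h3.le hc0.le ha0
    have hcancel : ((Ni (vi t) ω : ℝ) / vi t) * (vi t / vj t) = (Ni (vi t) ω : ℝ) / vj t :=
      div_mul_div_cancel₀ (ne_of_gt hvi0)
    have hstep : Δ / 2 ≤ ((Ni (vi t) ω : ℝ) - (Nj (vj t) ω : ℝ)) / vj t := by
      rw [sub_div]
      linarith [hmul, hcancel, h2, hkey]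
    exact (le_div_iff₀ hvj0).1 hstep
  refine ⟨part1, ?_⟩
  -- PART 2 : convergence of probabilities
  have hNimeas : ∀ u : ℝ, Measurable fun ω => Ni u ω := by
    intro u
    have h : (fun ω => Ni u ω)
        = fun ω => sSup {n : ℕ | ∑ k ∈ Finset.range n, (T k ω).1 ≤ u} :=
      funext fun ω => hNi u ω
    rw [h]
    exact measurable_count _ (fun n =>
      Finset.measurable_sum _ fun k _ => measurable_fst.comp (hmeas k)) u
  have hNjmeas : ∀ u : ℝ, Measurable fun ω => Nj u ω := by
    intro u
    have h : (fun ω => Nj u ω)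
        = fun ω => sSup {n : ℕ | ∑ k ∈ Finset.range n, (T k ω).2 ≤ u} :=
      funext fun ω => hNj u ω
    rw [h]
    exact measurable_count _ (fun n =>
      Finset.measurable_sum _ fun k _ => measurable_snd.comp (hmeas k)) u
  have hEmeas : ∀ t : ℝ, MeasurableSet {ω | Ni (vi t) ω ≤ Nj (vj t) ω} :=
    fun t => measurableSet_le (hNimeas (vi t)) (hNjmeas (vj t))
  have h_lim : ∀ᵐ ω ∂P, Tendsto
      (fun t : ℝ => Set.indicator {ω' | Ni (vi t) ω' ≤ Nj (vj t) ω'} (1 : Ω → ℝ≥0∞) ω)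
      atTop (𝓝 0) := by
    filter_upwards [part1] with ω hω
    have hev : ∀ᶠ t in atTop,
        Set.indicator {ω' | Ni (vi t) ω' ≤ Nj (vj t) ω'} (1 : Ω → ℝ≥0∞) ω = 0 := by
      filter_upwards [hω.eventually_ge_atTop 1] with t ht
      have hlt : Nj (vj t) ω < Ni (vi t) ω := by
        by_contra hcon
        push_neg at hcon
        have : (Ni (vi t) ω : ℝ) ≤ (Nj (vj t) ω : ℝ) := by exact_mod_cast hcon
        linarith
      exact Set.indicator_of_notMem (by simpa using not_le.2 hlt) _
    exact Tendsto.congr' (hev.mono fun t h => h.symm) tendsto_const_nhds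
  have h := tendsto_lintegral_filter_of_dominated_convergence (μ := P) (l := atTop)
      (F := fun t ω => Set.indicator {ω' | Ni (vi t) ω' ≤ Nj (vj t) ω'} (1 : Ω → ℝ≥0∞) ω)
      (f := fun _ => (0 : ℝ≥0∞)) (fun _ => (1 : ℝ≥0∞))
      (Eventually.of_forall fun t => Measurable.indicator measurable_const (hEmeas t))
      (Eventually.of_forall fun t => ae_of_all _ fun ω =>
        Set.indicator_apply_le' (fun _ => le_rfl) (fun _ => zero_le_one))
      (by simp)
      h_lim
  have heq : (fun t : ℝ => ∫⁻ ω, Set.indicator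
        {ω' | Ni (vi t) ω' ≤ Nj (vj t) ω'} (1 : Ω → ℝ≥0∞) ω ∂P)
      = fun t : ℝ => P {ω | Ni (vi t) ω ≤ Nj (vj t) ω} :=
    funext fun t => lintegral_indicator_one (hEmeas t)
  rw [heq] at h
  simpa using h
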